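/- Let G be a weighted digraph, let h be a positive integer, and let R ⊆ V be a set of vertices such that every directed path in the weighted transitive closure G*_ω with at least h hops and all of whose vertices lie in R has length strictly greater than dist_G between its endpoints. Let H' be any set of edges from G*_ω (each edge (x,y) ∈ H' weighted dist_G(x,y)). Then every shortest u-v path in G ∪ H' contains at most h vertices of R. -/

import Mathlib

namespace Paper

variable {V : Type*}

/-- `IsWalk E u v l` : `l` is the list of vertices visited after `u` on a
directed walk from `u` to `v` in the digraph with edge relation `E`.
The number of edges of the walk is `l.length`. -/
def IsWalk (E : V → V → Prop) : V → V → List V → Prop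
  | u, v, [] => u = v
  | u, v, x :: xs => E u x ∧ IsWalk E x v xs

/-- `v` is reachable from `u` by a directed walk (possibly trivial). -/
def Reach (E : V → V → Prop) (u v : V) : Prop := ∃ l, IsWalk E u v l

/-- The transitive closure `G*`: pairs `(u,v)` with `u ≠ v` and `v` reachable from `u`. -/
def TC (E : V → V → Prop) (u v : V) : Prop := u ≠ v ∧ Reach E u v

/-- `dist E u v` : minimum number of edges on a directed walk from `u` to `v`. -/
noncomputable def dist (E : V → V → Prop) (u v : V) : ℕ :=
  sInf {k | ∃ l, IsWalk E u v l ∧ l.length = k}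

/-- The digraph `G ∪ H` obtained by adding the edge set `H` to `E`. -/
def addE (E : V → V → Prop) (H : Finset (V × V)) : V → V → Prop :=
  fun a b => E a b ∨ (a, b) ∈ H


/-- `wlen w u l` : total weight of the walk starting at `u` visiting the vertices of
`l` in order, with edge-weight function `w`. -/
def wlen (w : V → V → ℝ) : V → List V → ℝ
  | _, [] => 0
  | u, x :: xs => w u x + wlen w x xs

/-- `wdist E w u v` : the weighted distance from `u` to `v`, the infimum of the
weights of all directed `u`-`v` walks. -/
noncomputable def wdist (E : V → V → Prop) (w : V → V → ℝ) (u v : V) : ℝ :=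
  sInf {r | ∃ l, IsWalk E u v l ∧ wlen w u l = r}

/-- The weights are integers in `[1, W]`. -/
def IntWeights (E : V → V → Prop) (w : V → V → ℝ) (W : ℕ) : Prop :=
  ∀ u v : V, E u v → ∃ m : ℕ, 1 ≤ m ∧ m ≤ W ∧ w u v = (m : ℝ)

/-- The weight function of `G ∪ H`, where each hopset edge `(u,v) ∈ H` is weighted by
`dist_G(u,v)`. -/
noncomputable def hopW [DecidableEq V] (E : V → V → Prop) (w : V → V → ℝ)
    (H : Finset (V × V)) : V → V → ℝ :=
  fun a b => if (a, b) ∈ H then wdist E w a b else w a b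

/-- `H` is a `(β,ε)`-hopset for the weighted digraph `(E,w)`: a set of edges of the
transitive closure, each `(u,v)` weighted `dist_G(u,v)`, such that for every pair
`u,v` with `v` reachable from `u`, no walk in `G ∪ H` is shorter than `dist_G(u,v)`,
and some walk in `G ∪ H` with at most `β` hops has weight at most
`(1+ε)·dist_G(u,v)`. -/
def IsHopset [DecidableEq V] (E : V → V → Prop) (w : V → V → ℝ)
    (β : ℕ) (ε : ℝ) (H : Finset (V × V)) : Prop :=
  (∀ e ∈ H, TC E e.1 e.2) ∧
  ∀ u v : V, TC E u v →
    (∀ l, IsWalk (addE E H) u v l → l.length ≤ β →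
      wdist E w u v ≤ wlen (hopW E w H) u l) ∧
    (∃ l, IsWalk (addE E H) u v l ∧ l.length ≤ β ∧
      wlen (hopW E w H) u l ≤ (1 + ε) * wdist E w u v)

/-- `FPath R p` : `p` lists the `m+1` vertices of a directed path with `m` hops in the
digraph with edge relation `R` (distinct vertices, consecutive edges in `R`). -/
def FPath (R : V → V → Prop) {m : ℕ} (p : Fin (m + 1) → V) : Prop :=
  Function.Injective p ∧ ∀ i : Fin m, R (p i.castSucc) (p i.succ)

/-- `fLen w p` : the length (total weight) of the path `p` under edge weights `w`. -/
noncomputable def fLen (w : V → V → ℝ) {m : ℕ} (p : Fin (m + 1) → V) : ℝ :=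
  ∑ i : Fin m, w (p i.castSucc) (p i.succ)

section Lemmas

variable {V : Type*} {E : V → V → Prop} {w : V → V → ℝ}

lemma isWalk_nil (u : V) : IsWalk E u u [] := rfl

lemma isWalk_append : ∀ {l1 : List V} {u x v : V} (l2 : List V),
    IsWalk E u x l1 → IsWalk E x v l2 → IsWalk E u v (l1 ++ l2)
  | [], u, x, v, l2, h1, h2 => by cases h1; exact h2
  | a :: t, u, x, v, l2, h1, h2 => ⟨h1.1, isWalk_append l2 h1.2 h2⟩

lemma wlen_append (w : V → V → ℝ) : ∀ {l1 : List V} {u x : V} (l2 : List V),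
    IsWalk E u x l1 → wlen w u (l1 ++ l2) = wlen w u l1 + wlen w x l2
  | [], u, x, l2, h1 => by cases h1; simp [wlen]
  | a :: t, u, x, l2, h1 => by
      rw [List.cons_append]
      show w u a + wlen w a (t ++ l2) = (w u a + wlen w a t) + wlen w x l2
      rw [wlen_append w l2 h1.2]; ring

lemma reach_trans {u x v : V} (h1 : Reach E u x) (h2 : Reach E x v) : Reach E u v := by
  obtain ⟨l1, h1⟩ := h1; obtain ⟨l2, h2⟩ := h2
  exact ⟨l1 ++ l2, isWalk_append l2 h1 h2⟩

lemma reach_refl (u : V) : Reach E u u := ⟨[], rfl⟩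

lemma isWalk_mono {E' : V → V → Prop} (hmono : ∀ a b, E a b → E' a b) :
    ∀ {l : List V} {u v : V}, IsWalk E u v l → IsWalk E' u v l
  | [], _, _, h => h
  | _ :: _, _, _, h => ⟨hmono _ _ h.1, isWalk_mono hmono h.2⟩

lemma reach_mono {E' : V → V → Prop} (hmono : ∀ a b, E a b → E' a b) {u v : V}
    (h : Reach E u v) : Reach E' u v := by
  obtain ⟨l, hl⟩ := h; exact ⟨l, isWalk_mono hmono hl⟩

lemma wlen_nonneg (hpos : ∀ a b, E a b → 0 ≤ w a b) :
    ∀ {l : List V} {u v : V}, IsWalk E u v l → 0 ≤ wlen w u l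
  | [], _, _, _ => le_refl 0
  | a :: t, u, v, h => by
      have h1 := wlen_nonneg hpos h.2
      have h2 := hpos _ _ h.1
      show 0 ≤ w u a + wlen w a t
      linarith

lemma wlen_mono {w' : V → V → ℝ} (hle : ∀ a b, E a b → w' a b ≤ w a b) :
    ∀ {l : List V} {u v : V}, IsWalk E u v l → wlen w' u l ≤ wlen w u l
  | [], _, _, _ => le_refl 0
  | a :: t, u, v, h => by
      have h1 := wlen_mono hle h.2
      have h2 := hle _ _ h.1
      show w' u a + wlen w' a t ≤ w u a + wlen w a t
      linarith

variable (hpos : ∀ a b, E a b → 0 ≤ w a b)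
include hpos

lemma wdist_nonneg (u v : V) : 0 ≤ wdist E w u v := by
  apply Real.sInf_nonneg
  rintro x ⟨l, hl, rfl⟩
  exact wlen_nonneg hpos hl

lemma wdist_le_wlen {u v : V} {l : List V} (h : IsWalk E u v l) :
    wdist E w u v ≤ wlen w u l := by
  have hmem : wlen w u l ∈ {r | ∃ l', IsWalk E u v l' ∧ wlen w u l' = r} := ⟨l, h, rfl⟩
  have hbdd : BddBelow {r | ∃ l', IsWalk E u v l' ∧ wlen w u l' = r} := by
    refine ⟨0, ?_⟩
    rintro x ⟨l', hl', rfl⟩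
    exact wlen_nonneg hpos hl'
  exact csInf_le hbdd hmem

lemma wdist_self (u : V) : wdist E w u u = 0 :=
  le_antisymm (wdist_le_wlen hpos (isWalk_nil u)) (wdist_nonneg hpos u u)

lemma wdist_triangle {u x v : V} (h1 : Reach E u x) (h2 : Reach E x v) :
    wdist E w u v ≤ wdist E w u x + wdist E w x v := by
  obtain ⟨l2, hl2⟩ := h2
  have key : ∀ b ∈ {r | ∃ l, IsWalk E x v l ∧ wlen w x l = r},
      wdist E w u v - b ≤ wdist E w u x := by
    rintro b ⟨l2', hl2', rfl⟩
    obtain ⟨l1, hl1⟩ := h1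
    have hne : (wlen w u l1) ∈ {r | ∃ l, IsWalk E u x l ∧ wlen w u l = r} := ⟨l1, hl1, rfl⟩
    apply le_csInf ⟨_, hne⟩
    rintro c ⟨l1', hl1', rfl⟩
    have := wdist_le_wlen hpos (isWalk_append l2' hl1' hl2')
    rw [wlen_append w l2' hl1'] at this
    linarith
  have hne2 : (wlen w x l2) ∈ {r | ∃ l, IsWalk E x v l ∧ wlen w x l = r} := ⟨l2, hl2, rfl⟩
  have h2' : wdist E w u v - wdist E w u x ≤ wdist E w x v :=
    le_csInf ⟨_, hne2⟩ (fun b hb => by linarith [key b hb])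
  linarith

end Lemmas

section Hop

variable {V : Type*} [DecidableEq V] {E : V → V → Prop} {w : V → V → ℝ}
  {H' : Finset (V × V)}

variable (hw : ∀ a b, E a b → 0 ≤ w a b) (hH' : ∀ e ∈ H', TC E e.1 e.2)

include hH' in
lemma reach_of_addE_edge {a b : V} (h : addE E H' a b) : Reach E a b := by
  cases h with
  | inl h => exact ⟨[b], h, rfl⟩
  | inr h => exact (hH' (a, b) h).2

include hH' in
lemma reach_of_addE_walk {u v : V} {l : List V} (h : IsWalk (addE E H') u v l) :
    Reach E u v := by
  induction l generalizing u with
  | nil => exact (show u = v from h) ▸ reach_refl u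
  | cons a t ih => exact reach_trans (reach_of_addE_edge hH' h.1) (ih h.2)

include hw in
lemma hopW_nonneg {a b : V} (h : addE E H' a b) : 0 ≤ hopW E w H' a b := by
  unfold hopW
  split
  · exact wdist_nonneg hw a b
  · cases h with
    | inl h => exact hw _ _ h
    | inr h => exact absurd h (by assumption)

include hw in
lemma wdist_le_hopW {a b : V} (h : addE E H' a b) : wdist E w a b ≤ hopW E w H' a b := by
  unfold hopW
  split
  · exact le_refl _
  · cases h with
    | inl h =>
        have := wdist_le_wlen hw (show IsWalk E a b [b] from ⟨h, rfl⟩)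
        simpa [wlen] using this
    | inr h => exact absurd h (by assumption)

include hw in
lemma hopW_le_w {a b : V} (h : E a b) : hopW E w H' a b ≤ w a b := by
  unfold hopW
  split
  · have := wdist_le_wlen hw (show IsWalk E a b [b] from ⟨h, rfl⟩)
    simpa [wlen] using this
  · exact le_refl _

include hw in
lemma wdist_addE_le {u v : V} (hr : Reach E u v) :
    wdist (addE E H') (hopW E w H') u v ≤ wdist E w u v := by
  obtain ⟨l, hl⟩ := hr
  have hne : wlen w u l ∈ {r | ∃ l', IsWalk E u v l' ∧ wlen w u l' = r} := ⟨l, hl, rfl⟩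
  apply le_csInf ⟨_, hne⟩
  rintro b ⟨l', hl', rfl⟩
  calc wdist (addE E H') (hopW E w H') u v
      ≤ wlen (hopW E w H') u l' := by
        apply wdist_le_wlen (fun a b h => hopW_nonneg hw h)
        exact isWalk_mono (fun a b h => Or.inl h) hl'
    _ ≤ wlen w u l' := wlen_mono (fun a b h => hopW_le_w hw h) hl'

/-- tail part of the lower bound. -/
noncomputable def wtail (E : V → V → Prop) (w : V → V → ℝ) : List V → V → ℝ
  | [], _ => 0
  | a :: t, v => wlen (wdist E w) a t + wdist E w (t.getLastD a) v

/-- lower bound on the weight of a walk from `u` to `v` passing (in order) through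
the vertices of `r`. -/
noncomputable def lbB (E : V → V → Prop) (w : V → V → ℝ) (r : List V) (u v : V) : ℝ :=
  wdist E w u (r.headD v) + wtail E w r v

include hw in
lemma lbB_step {r : List V} {u x v : V} (hux : Reach E u x)
    (hhd : Reach E x (r.headD v)) :
    lbB E w r u v ≤ wdist E w u x + lbB E w r x v := by
  unfold lbB
  have := wdist_triangle hw hux hhd
  linarith

include hw in
lemma lbB_prepend {r : List V} {u x v : V} (hux : Reach E u x)
    (hhd : Reach E x (r.headD v)) :
    lbB E w (u :: r) u v ≤ wdist E w u x + lbB E w r x v := by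
  cases r with
  | nil =>
      show wdist E w u u + (0 + wdist E w u v) ≤ wdist E w u x + (wdist E w x v + 0)
      rw [wdist_self hw]
      have := wdist_triangle hw hux (show Reach E x v from hhd)
      linarith
  | cons a t =>
      show wdist E w u u + (wlen (wdist E w) u (a :: t) + wdist E w ((a :: t).getLastD u) v)
          ≤ wdist E w u x + (wdist E w x a + (wlen (wdist E w) a t + wdist E w (t.getLastD a) v))
      rw [wdist_self hw, List.getLastD_cons]
      show 0 + ((wdist E w u a + wlen (wdist E w) a t) + wdist E w (t.getLastD a) v) ≤ _
      have := wdist_triangle hw hux (show Reach E x a from hhd)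
      linarith

end Hop

section Extract

variable {V : Type*} [DecidableEq V] {E : V → V → Prop} {w : V → V → ℝ}
  {H' : Finset (V × V)}

lemma extract (hw : ∀ a b, E a b → 0 ≤ w a b) (hH' : ∀ e ∈ H', TC E e.1 e.2)
    (R : Finset V) :
    ∀ (p : List V) (u v : V), IsWalk (addE E H') u v p →
    ∃ r : List V, r.Nodup ∧ (∀ y ∈ r, y ∈ R) ∧
      ((u :: p).toFinset.filter (· ∈ R)) ⊆ r.toFinset ∧
      List.Chain' (TC E) r ∧
      (∀ y ∈ r, Reach E u y ∧ Reach E y v) ∧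
      lbB E w r u v ≤ wlen (hopW E w H') u p := by
  intro p
  induction p with
  | nil =>
      intro u v hwalk
      have huv : u = v := hwalk
      subst huv
      by_cases hu : u ∈ R
      · refine ⟨[u], by simp, by simp [hu], ?_, by exact List.isChain_singleton u, ?_, ?_⟩
        · intro y hy
          simp only [List.toFinset_cons, List.toFinset_nil, Finset.mem_filter,
            Finset.mem_insert, Finset.notMem_empty, or_false] at hy
          simp [hy.1]
        · intro y hy
          simp only [List.mem_singleton] at hy
          constructor <;> (rw [hy]; exact reach_refl u)
        · simp [lbB, wtail, wlen, wdist_self hw]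
      · refine ⟨[], by simp, by simp, ?_, by exact List.isChain_nil, by simp, ?_⟩
        · intro y hy
          simp only [List.toFinset_cons, List.toFinset_nil, Finset.mem_filter,
            Finset.mem_insert, Finset.notMem_empty, or_false] at hy
          rcases hy with ⟨rfl, hyR⟩
          exact absurd hyR hu
        · simp [lbB, wtail, wlen, wdist_self hw]
  | cons x xs ih =>
      intro u v hwalk
      obtain ⟨he, hws⟩ := hwalk
      obtain ⟨r, hnd, hmemR, hsub, hch, hreach, hB⟩ := ih x v hws
      have hux : Reach E u x := reach_of_addE_edge hH' he
      have hxv : Reach E x v := reach_of_addE_walk hH' hws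
      have hhd : Reach E x (r.headD v) := by
        cases r with
        | nil => exact hxv
        | cons a t => exact (hreach a (by simp)).1
      have hdle : wdist E w u x ≤ hopW E w H' u x := wdist_le_hopW hw he
      have hwlen : wlen (hopW E w H') u (x :: xs)
          = hopW E w H' u x + wlen (hopW E w H') x xs := rfl
      by_cases hu : u ∈ R ∧ u ∉ r
      · refine ⟨u :: r, ?_, ?_, ?_, ?_, ?_, ?_⟩
        · simp [hnd, hu.2]
        · intro y hy
          rcases List.mem_cons.mp hy with rfl | hy
          · exact hu.1
          · exact hmemR y hy
        · intro y hy
          simp only [List.toFinset_cons, Finset.mem_filter, Finset.mem_insert] at hy ⊢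
          rcases hy with ⟨rfl | hy, hyR⟩
          · left; rfl
          · right
            exact hsub (by
              simp only [List.toFinset_cons, Finset.mem_filter, Finset.mem_insert]
              exact ⟨hy, hyR⟩)
        · unfold List.Chain'
          rw [List.isChain_cons]
          refine ⟨?_, hch⟩
          intro a ha
          cases r with
          | nil => simp at ha
          | cons b t =>
              have hab : b = a := by simpa using ha
              rw [← hab]
              refine ⟨?_, reach_trans hux ((hreach b (List.mem_cons_self)).1)⟩
              intro hEq
              exact hu.2 (by rw [hEq]; exact List.mem_cons_self)
        · intro y hy
          rcases List.mem_cons.mp hy with rfl | hy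
          · exact ⟨reach_refl y, reach_trans hux hxv⟩
          · exact ⟨reach_trans hux (hreach y hy).1, (hreach y hy).2⟩
        · have := lbB_prepend hw hux hhd
          rw [hwlen]; linarith
      · refine ⟨r, hnd, hmemR, ?_, hch, ?_, ?_⟩
        · intro y hy
          simp only [List.toFinset_cons, Finset.mem_filter, Finset.mem_insert] at hy
          rcases hy with ⟨rfl | hy, hyR⟩
          · rcases not_and_or.mp hu with h | h
            · exact absurd hyR h
            · exact List.mem_toFinset.mpr (not_not.mp h)
          · exact hsub (by
              simp only [List.toFinset_cons, Finset.mem_filter, Finset.mem_insert]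
              exact ⟨hy, hyR⟩)
        · intro y hy
          exact ⟨reach_trans hux (hreach y hy).1, (hreach y hy).2⟩
        · have := lbB_step hw hux hhd (v := v)
          rw [hwlen]; linarith

end Extract

section FinConv

variable {V : Type*}

lemma wlen_eq_sum (w' : V → V → ℝ) :
    ∀ (t : List V) (a : V), wlen w' a t
      = ∑ i : Fin t.length, w' ((a :: t).get i.castSucc) ((a :: t).get i.succ)
  | [], a => by simp [wlen]
  | b :: t, a => by
      show w' a b + wlen w' b t
        = ∑ i : Fin (t.length + 1), w' ((a :: b :: t).get i.castSucc) ((a :: b :: t).get i.succ)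
      rw [wlen_eq_sum w' t b, Fin.sum_univ_succ]
      rfl

lemma getLastD_eq_get : ∀ (t : List V) (a : V),
    t.getLastD a = (a :: t).get (Fin.last t.length)
  | [], a => rfl
  | b :: t, a => by
      rw [List.getLastD_cons, getLastD_eq_get t b]
      rfl

lemma reach_of_chain' {E : V → V → Prop} :
    ∀ (t : List V) (a : V), List.Chain' (TC E) (a :: t) → Reach E a (t.getLastD a)
  | [], a, _ => reach_refl a
  | b :: t, a, h => by
      rw [List.getLastD_cons]
      have h1 : TC E a b := (List.isChain_cons_cons.mp h).1
      exact reach_trans h1.2 (reach_of_chain' t b (List.isChain_cons_cons.mp h).2)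

end FinConv

/-- Let `G` be a weighted digraph, `h` a positive integer, and
`R ⊆ V` a set of vertices such that every directed path in the weighted transitive
closure `G*_ω` with at least `h` hops and all of whose vertices lie in `R` has length
strictly greater than the `G`-distance between its endpoints. Let `H'` be any set of
edges from `G*_ω`, each `(x,y) ∈ H'` weighted `dist_G(x,y)`. Then every shortest
`u`-`v` path in `G ∪ H'` contains at most `h` vertices of `R`. -/
theorem shortest_path_few_vertices_outside (n h : ℕ) (hh : 1 ≤ h)
    (E : Fin n → Fin n → Prop) (w : Fin n → Fin n → ℝ)
    (hw : ∀ u v : Fin n, E u v → 0 < w u v)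
    (R : Finset (Fin n))
    (hR : ∀ m : ℕ, h ≤ m → ∀ q : Fin (m + 1) → Fin n, FPath (TC E) q →
      (∀ x : Fin (m + 1), q x ∈ R) →
      wdist E w (q 0) (q (Fin.last m)) < fLen (wdist E w) q)
    (H' : Finset (Fin n × Fin n)) (hH' : ∀ e ∈ H', TC E e.1 e.2)
    (u v : Fin n) (p : List (Fin n))
    (hwalk : IsWalk (addE E H') u v p)
    (hshort : wlen (hopW E w H') u p = wdist (addE E H') (hopW E w H') u v) :
    ((u :: p).toFinset.filter (· ∈ R)).card ≤ h := by
  by_contra hcon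
  push_neg at hcon
  have hw0 : ∀ a b : Fin n, E a b → 0 ≤ w a b := fun a b hab => (hw a b hab).le
  obtain ⟨r, hnd, hmemR, hsub, hch, hreach, hB⟩ := extract hw0 hH' R p u v hwalk
  have hcard : ((u :: p).toFinset.filter (· ∈ R)).card ≤ r.length := by
    rw [← List.toFinset_card_of_nodup hnd]
    exact Finset.card_le_card hsub
  have hlen : h + 1 ≤ r.length := by omega
  cases r with
  | nil => simp at hlen
  | cons a t =>
    have hm : h ≤ t.length := by simpa using hlen
    set q : Fin (t.length + 1) → Fin n := fun i => (a :: t).get i with hqdef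
    have hq : FPath (TC E) q := by
      constructor
      · exact List.nodup_iff_injective_get.mp hnd
      · intro i
        have hlt : (i : ℕ) < (a :: t).length - 1 := by simpa using i.isLt
        exact List.isChain_iff_getElem.mp hch i.1 (by omega)
    have hvals : ∀ x : Fin (t.length + 1), q x ∈ R := fun x => hmemR _ (List.get_mem _ _)
    have hstrict0 := hR t.length hm q hq hvals
    have hq0 : q 0 = a := by simp [hqdef]
    have hqlast : q (Fin.last t.length) = t.getLastD a := (getLastD_eq_get t a).symm
    have hfl : fLen (wdist E w) q = wlen (wdist E w) a t := (wlen_eq_sum (wdist E w) t a).symm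
    rw [hq0, hqlast, hfl] at hstrict0
    set z := t.getLastD a with hzdef
    have hamem : a ∈ a :: t := List.mem_cons_self
    have hzmem : z ∈ a :: t := by
      rw [hzdef, getLastD_eq_get]
      exact List.get_mem _ _
    have hua : Reach E u a := (hreach a hamem).1
    have haz : Reach E a z := reach_of_chain' t a hch
    have hzv : Reach E z v := (hreach z hzmem).2
    have hEA : ∀ a b : Fin n, E a b → addE E H' a b := fun _ _ hab => Or.inl hab
    have hposA : ∀ a b : Fin n, addE E H' a b → 0 ≤ hopW E w H' a b :=
      fun a b hab => hopW_nonneg hw0 hab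
    have t1 : wdist (addE E H') (hopW E w H') u v
        ≤ wdist (addE E H') (hopW E w H') u a + wdist (addE E H') (hopW E w H') a v :=
      wdist_triangle hposA (reach_mono hEA hua)
        (reach_mono hEA (reach_trans haz hzv))
    have t2 : wdist (addE E H') (hopW E w H') a v
        ≤ wdist (addE E H') (hopW E w H') a z + wdist (addE E H') (hopW E w H') z v :=
      wdist_triangle hposA (reach_mono hEA haz) (reach_mono hEA hzv)
    have c1 : wdist (addE E H') (hopW E w H') u a ≤ wdist E w u a := wdist_addE_le hw0 hua
    have c2 : wdist (addE E H') (hopW E w H') a z ≤ wdist E w a z := wdist_addE_le hw0 haz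
    have c3 : wdist (addE E H') (hopW E w H') z v ≤ wdist E w z v := wdist_addE_le hw0 hzv
    have hBval : lbB E w (a :: t) u v
        = wdist E w u a + (wlen (wdist E w) a t + wdist E w z v) := by
      simp [lbB, wtail, hzdef]
    rw [hshort] at hB
    rw [hBval] at hB
    linarith

end Paper
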